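/- For every q ∈ ℝ with q ∉ {q₋, 0, q₊}, the function p(q) := (q − q₊)(q − q₋)/(r(q)·q) is differentiable at q with derivative p'(q) = 3k² / (4 r(q) q²); combined with r'(q) = 1/p(q), this verifies that along the solution curve dp/dr = (3k²/(4r))·(p/q²), i.e. the pair (p, q) as functions of r solves Buchdahl's evolution equations with Λ = 0. -/

import Mathlib

open Real

lemma aux_abs_rpow_deriv (c e x : ℝ) (hx : x ≠ c) :
    HasDerivAt (fun y => |y - c| ^ e) (e * |x - c| ^ e / (x - c)) x := by
  have hne : x - c ≠ 0 := sub_ne_zero.mpr hx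
  rcases lt_or_gt_of_ne hx with h | h
  · have hbase : (0:ℝ) < c - x := by linarith
    have h1 : HasDerivAt (fun y => (c - y) ^ e) (e * (c - x) ^ (e - 1) * (0 - 1)) x := by
      simpa [Function.comp_def] using (Real.hasDerivAt_rpow_const (Or.inl hbase.ne')).comp x
        ((hasDerivAt_const x c).sub (hasDerivAt_id x))
    have h2 : HasDerivAt (fun y => |y - c| ^ e) (e * (c - x) ^ (e - 1) * (0 - 1)) x := by
      apply h1.congr_of_eventuallyEq
      filter_upwards [eventually_lt_nhds h] with y hy
      rw [abs_of_neg (by linarith)]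
      ring_nf
    convert h2 using 1
    rw [abs_of_neg (by linarith), Real.rpow_sub hbase, Real.rpow_one]
    field_simp [hne]
    ring
  · have hbase : (0:ℝ) < x - c := by linarith
    have h1 : HasDerivAt (fun y => (y - c) ^ e) (e * (x - c) ^ (e - 1) * 1) x := by
      simpa [Function.comp_def] using (Real.hasDerivAt_rpow_const (Or.inl hbase.ne')).comp x
        ((hasDerivAt_id x).sub (hasDerivAt_const x c))
    have h2 : HasDerivAt (fun y => |y - c| ^ e) (e * (x - c) ^ (e - 1) * 1) x := by
      apply h1.congr_of_eventuallyEq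
      filter_upwards [eventually_gt_nhds h] with y hy
      rw [abs_of_pos (by linarith)]
    convert h2 using 1
    rw [abs_of_pos (by linarith), Real.rpow_sub hbase, Real.rpow_one]
    field_simp [hne]


/-- For `q ∉ {q₋, 0, q₊}`, `p(q) = (q−q₊)(q−q₋)/(r(q)·q)` is differentiable at `q` with
derivative `p'(q) = 3k²/(4 r(q) q²)`; combined with `dq/dr = p`, along the solution curve
`dp/dr = p'(q)·p(q) = (3k²/(4r))·(p/q²)`, i.e. Buchdahl's evolution equations with Λ = 0. -/
theorem special_buchdahl_p_hasDerivAt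
    (rs k : ℝ) (hrs : 0 < rs)
    (qp qm : ℝ)
    (hqp : qp = (-rs + Real.sqrt (rs ^ 2 + 3 * k ^ 2)) / 2)
    (hqm : qm = (-rs - Real.sqrt (rs ^ 2 + 3 * k ^ 2)) / 2)
    (r p : ℝ → ℝ)
    (hr : ∀ q : ℝ, r q = |q - qp| ^ (qp / (qp - qm)) * |q - qm| ^ (-(qm / (qp - qm))))
    (hp : ∀ q : ℝ, p q = (q - qp) * (q - qm) / (r q * q))
    (q : ℝ) (h1 : q ≠ qm) (h2 : q ≠ 0) (h3 : q ≠ qp) :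
    HasDerivAt p (3 * k ^ 2 / (4 * r q * q ^ 2)) q ∧
      (3 * k ^ 2 / (4 * r q * q ^ 2)) * p q = (3 * k ^ 2 / (4 * r q)) * (p q / q ^ 2) := by
  set s := Real.sqrt (rs ^ 2 + 3 * k ^ 2) with hs
  have hsnn : (0:ℝ) ≤ rs ^ 2 + 3 * k ^ 2 := by positivity
  have hs2 : s ^ 2 = rs ^ 2 + 3 * k ^ 2 := Real.sq_sqrt hsnn
  have hspos : 0 < s := Real.sqrt_pos.mpr (by nlinarith)
  have hdm : qp - qm = s := by rw [hqp, hqm]; ring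
  have hprod : qp * qm = -(3 * k ^ 2) / 4 := by
    rw [hqp, hqm]; linear_combination (-(1:ℝ)/4) * hs2
  set a := qp / (qp - qm) with ha
  set b := -(qm / (qp - qm)) with hb
  have hdmne : qp - qm ≠ 0 := by rw [hdm]; exact hspos.ne'
  have hab : a + b = 1 := by rw [ha, hb]; field_simp; ring
  have hab2 : a * qm + b * qp = 0 := by rw [ha, hb]; field_simp; ring
  have hqpne : q - qp ≠ 0 := sub_ne_zero.mpr h3
  have hqmne : q - qm ≠ 0 := sub_ne_zero.mpr h1
  set A := |q - qp| ^ a with hA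
  set B := |q - qm| ^ b with hB
  have hApos : 0 < A := Real.rpow_pos_of_pos (abs_pos.mpr hqpne) a
  have hBpos : 0 < B := Real.rpow_pos_of_pos (abs_pos.mpr hqmne) b
  have hrq : r q = A * B := hr q
  have hrfun : r = fun y => |y - qp| ^ a * |y - qm| ^ b := funext hr
  have hdA := aux_abs_rpow_deriv qp a q h3
  have hdB := aux_abs_rpow_deriv qm b q h1
  have hdr : HasDerivAt r (a * A / (q - qp) * B + A * (b * B / (q - qm))) q := by
    rw [hrfun]; exact hdA.mul hdB
  have hdD : HasDerivAt (fun y => r y * y)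
      ((a * A / (q - qp) * B + A * (b * B / (q - qm))) * q + r q * 1) q :=
    hdr.mul (hasDerivAt_id q)
  have hdu : HasDerivAt (fun y => (y - qp) * (y - qm)) (1 * (q - qm) + (q - qp) * 1) q :=
    ((hasDerivAt_id q).sub_const qp).mul ((hasDerivAt_id q).sub_const qm)
  have hDne : r q * q ≠ 0 := by rw [hrq]; exact mul_ne_zero (by positivity) h2
  have hdiv := hdu.div hdD hDne
  have hpfun : p = fun y => (y - qp) * (y - qm) / (r y * y) := funext hp
  constructor
  · rw [hpfun]
    convert hdiv using 1
    iterate 3 rfl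
    rw [hrq]
    have hinv : (-qm + qp)⁻¹ * (qp - qm) = 1 := by
      rw [show -qm + qp = qp - qm from by ring]; exact inv_mul_cancel₀ hdmne
    field_simp
    ring_nf
    linear_combination (4 : ℝ) * hprod + (4*q^2) * hinv
  · rw [hrq]
    field_simp
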